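/- Let n ≥ 1 and let P be a finite family of formal strict inequalities, each given by a pair (U,V) of multisets over {1,…,n} with multiplicity functions m_U, m_V : {1,…,n} → ℕ. Then P is realisable (i.e. there exists v : {1,…,n} → ℝ with v(i) > 0 for all i such that Σ_{i=1}^{n} m_U(i)·v(i) < Σ_{i=1}^{n} m_V(i)·v(i) holds for every (U,V) ∈ P) if and only if there is no positive integer combination of inequalities in P that results in an inequality A < B with B ⊆ A as multisets; that is, if and only if there is no family of nonnegative integer coefficients (c_{(U,V)})_{(U,V)∈P}, not all zero, such that Σ_{(U,V)∈P} c_{(U,V)}·m_V(i) ≤ Σ_{(U,V)∈P} c_{(U,V)}·m_U(i) holds for every i ∈ {1,…,n}. -/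

import Mathlib

open Finset

lemma exists_t {P Q : Type*} [Fintype P] [Fintype Q] (l : P → ℝ) (u : Q → ℝ)
    (h1 : ∀ q, 0 < u q) (h2 : ∀ p q, l p < u q) :
    ∃ t : ℝ, 0 ≤ t ∧ (∀ p, l p < t) ∧ ∀ q, t < u q := by
  classical
  set Mset : Finset ℝ := insert (0:ℝ) ((univ : Finset P).image l) with hM
  have hMne : Mset.Nonempty := ⟨0, by simp [hM]⟩
  set M : ℝ := Mset.max' hMne with hMdef
  have hM0 : 0 ≤ M := Finset.le_max' _ _ (by simp [hM])
  have hMl : ∀ p, l p ≤ M := fun p => Finset.le_max' _ _ (by simp [hM])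
  have hMlt : ∀ q, M < u q := by
    intro q
    have := Finset.max'_mem Mset hMne
    rw [← hMdef] at this
    simp only [hM, Finset.mem_insert, Finset.mem_image] at this
    rcases this with h | ⟨p, _, hp⟩
    · rw [h]; exact h1 q
    · rw [← hp]; exact h2 p q
  by_cases hQ : Nonempty Q
  · obtain ⟨q0, hq0, hq0min⟩ := Finset.exists_min_image (univ : Finset Q) u ⟨hQ.some, mem_univ _⟩
    refine ⟨(M + u q0)/2, by linarith [hMlt q0], fun p => by linarith [hMl p, hMlt q0], fun q => ?_⟩
    have := hq0min q (mem_univ q)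
    linarith [hMlt q0]
  · exact ⟨M + 1, by linarith, fun p => by linarith [hMl p], fun q => absurd ⟨q⟩ hQ⟩

lemma comb {ι κ : Type*} [Fintype ι] [Fintype κ] {m : ℕ} (a : ι → Fin m → ℤ)
    (w : κ → ι → ℕ) (c' : κ → ℕ) (hnz : ∀ k, ∃ j, w k j ≠ 0) (hk : ∃ k, c' k ≠ 0)
    (hle : ∀ i, ∑ k, (c' k : ℤ) * (∑ j, (w k j : ℤ) * a j i) ≤ 0) :
    ∃ c : ι → ℕ, (∃ j, c j ≠ 0) ∧ ∀ i, ∑ j, (c j : ℤ) * a j i ≤ 0 := by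
  classical
  refine ⟨fun j => ∑ k, c' k * w k j, ?_, ?_⟩
  · obtain ⟨k0, hk0⟩ := hk
    obtain ⟨j0, hj0⟩ := hnz k0
    refine ⟨j0, ?_⟩
    have h1 : 0 < c' k0 * w k0 j0 := Nat.pos_of_ne_zero (Nat.mul_ne_zero hk0 hj0)
    have h2 := Finset.single_le_sum (f := fun k => c' k * w k j0) (fun k _ => Nat.zero_le _) (mem_univ k0)
    show (∑ k, c' k * w k j0) ≠ 0
    omega
  · intro i
    have : ∑ j, ((∑ k, c' k * w k j : ℕ) : ℤ) * a j i
        = ∑ k, (c' k : ℤ) * (∑ j, (w k j : ℤ) * a j i) := by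
      push_cast
      simp_rw [Finset.sum_mul, Finset.mul_sum, mul_assoc]
      rw [Finset.sum_comm]
    rw [this]
    exact hle i

universe u

section FM
variable {ι : Type u} [Fintype ι] [DecidableEq ι] {n : ℕ}

/-- FM multipliers: which nonneg combination of old rows gives each new row. -/
def wfun (a : ι → Fin (n+1) → ℤ) :
    ({j : ι // 0 < a j (Fin.last n)} × {j : ι // a j (Fin.last n) < 0}) ⊕
      ({j : ι // a j (Fin.last n) < 0} ⊕ {j : ι // a j (Fin.last n) = 0}) → ι → ℕ
  | .inl (p, q) => fun j => (if j = p.1 then (- a q.1 (Fin.last n)).toNat else 0) +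
      (if j = q.1 then (a p.1 (Fin.last n)).toNat else 0)
  | .inr (.inl q) => fun j => if j = q.1 then 1 else 0
  | .inr (.inr z) => fun j => if j = z.1 then 1 else 0

lemma wcomb1 (a : ι → Fin (n+1) → ℤ) (p : {j : ι // 0 < a j (Fin.last n)})
    (q : {j : ι // a j (Fin.last n) < 0}) (i : Fin (n+1)) :
    ∑ j, (wfun a (.inl (p, q)) j : ℤ) * a j i
      = (- a q.1 (Fin.last n)) * a p.1 i + a p.1 (Fin.last n) * a q.1 i := by
  simp only [wfun, Nat.cast_add, apply_ite (fun x : ℕ => (x : ℤ)), Nat.cast_zero, add_mul,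
    ite_mul, zero_mul, Finset.sum_add_distrib, Finset.sum_ite_eq', Finset.mem_univ, if_true,
    Int.toNat_of_nonneg (neg_nonneg.mpr q.2.le), Int.toNat_of_nonneg p.2.le]

lemma wcomb2 (a : ι → Fin (n+1) → ℤ) (q : {j : ι // a j (Fin.last n) < 0}) (i : Fin (n+1)) :
    ∑ j, (wfun a (.inr (.inl q)) j : ℤ) * a j i = a q.1 i := by
  simp only [wfun, apply_ite (fun x : ℕ => (x : ℤ)), Nat.cast_one, Nat.cast_zero,
    ite_mul, zero_mul, one_mul, Finset.sum_ite_eq', Finset.mem_univ, if_true]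

lemma wcomb3 (a : ι → Fin (n+1) → ℤ) (z : {j : ι // a j (Fin.last n) = 0}) (i : Fin (n+1)) :
    ∑ j, (wfun a (.inr (.inr z)) j : ℤ) * a j i = a z.1 i := by
  simp only [wfun, apply_ite (fun x : ℕ => (x : ℤ)), Nat.cast_one, Nat.cast_zero,
    ite_mul, zero_mul, one_mul, Finset.sum_ite_eq', Finset.mem_univ, if_true]

/-- the new rows (restricted to the first n coordinates) -/
def bfun (a : ι → Fin (n+1) → ℤ) :
    ({j : ι // 0 < a j (Fin.last n)} × {j : ι // a j (Fin.last n) < 0}) ⊕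
      ({j : ι // a j (Fin.last n) < 0} ⊕ {j : ι // a j (Fin.last n) = 0}) → Fin n → ℤ :=
  fun k i => ∑ j, (wfun a k j : ℤ) * a j i.castSucc

end FM

theorem gordan : ∀ (n : ℕ) {ι : Type u} [Fintype ι] (a : ι → Fin n → ℤ),
    (¬ ∃ c : ι → ℕ, (∃ j, c j ≠ 0) ∧ ∀ i, ∑ j, (c j : ℤ) * a j i ≤ 0) →
    ∃ v : Fin n → ℝ, (∀ i, 0 ≤ v i) ∧ ∀ j, 0 < ∑ i, (a j i : ℝ) * v i := by
  intro n
  induction n with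
  | zero =>
    intro ι _ a h
    by_cases hι : Nonempty ι
    · exact absurd ⟨fun _ => 1, ⟨hι.some, one_ne_zero⟩, fun i => i.elim0⟩ h
    · exact ⟨0, fun i => le_refl _, fun j => absurd ⟨j⟩ hι⟩
  | succ n ih =>
    intro ι _ a h
    classical
    -- certificate transfer: no certificate for the reduced system
    have hb : ¬ ∃ c' : _ → ℕ, (∃ k, c' k ≠ 0) ∧
        ∀ i : Fin n, ∑ k, (c' k : ℤ) * (bfun a k i) ≤ 0 := by
      rintro ⟨c', hk, hc'⟩
      apply h
      apply comb a (wfun a) c' ?_ hk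
      · intro i
        induction i using Fin.lastCases with
        | last =>
          apply Finset.sum_nonpos
          intro k _
          apply mul_nonpos_of_nonneg_of_nonpos (by positivity)
          match k with
          | .inl (p, q) =>
            rw [wcomb1]
            nlinarith [p.2, q.2]
          | .inr (.inl q) =>
            rw [wcomb2]
            exact q.2.le
          | .inr (.inr z) =>
            rw [wcomb3]
            exact z.2.le
        | cast i =>
          exact hc' i
      · intro k
        match k with
        | .inl (p, q) =>
          refine ⟨p.1, ?_⟩
          simp only [wfun, if_pos rfl]
          have hq := q.2
          split_ifs with h' <;> omega
        | .inr (.inl q) => exact ⟨q.1, by simp [wfun]⟩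
        | .inr (.inr z) => exact ⟨z.1, by simp [wfun]⟩
    obtain ⟨v', hv0, hv⟩ := ih (bfun a) hb
    set S : ι → ℝ := fun j => ∑ i : Fin n, (a j i.castSucc : ℝ) * v' i with hS
    have key : ∀ k, (0:ℝ) < ∑ i : Fin n, (bfun a k i : ℝ) * v' i := hv
    have hsplit : ∀ (x y : ι) (cx cy : ℤ),
        ∑ i : Fin n, ((cx * a x i.castSucc + cy * a y i.castSucc : ℤ) : ℝ) * v' i
          = (cx : ℝ) * S x + (cy : ℝ) * S y := by
      intro x y cx cy
      simp only [hS]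
      push_cast
      simp_rw [add_mul, mul_assoc]
      rw [Finset.sum_add_distrib, ← Finset.mul_sum, ← Finset.mul_sum]
    have hN : ∀ q : {j : ι // a j (Fin.last n) < 0}, (0:ℝ) < S q.1 := by
      intro q
      have hk := key (.inr (.inl q))
      have e : ∀ i : Fin n, bfun a (Sum.inr (Sum.inl q)) i = a q.1 i.castSucc :=
        fun i => wcomb2 a q i.castSucc
      simp only [e] at hk
      simp only [hS]
      exact hk
    have hZ : ∀ z : {j : ι // a j (Fin.last n) = 0}, (0:ℝ) < S z.1 := by
      intro z
      have hk := key (.inr (.inr z))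
      have e : ∀ i : Fin n, bfun a (Sum.inr (Sum.inr z)) i = a z.1 i.castSucc :=
        fun i => wcomb3 a z i.castSucc
      simp only [e] at hk
      simp only [hS]
      exact hk
    have hPN : ∀ (p : {j : ι // 0 < a j (Fin.last n)}) (q : {j : ι // a j (Fin.last n) < 0}),
        (0:ℝ) < -(a q.1 (Fin.last n) : ℝ) * S p.1 + (a p.1 (Fin.last n) : ℝ) * S q.1 := by
      intro p q
      have hk := key (.inl (p, q))
      have e : ∀ i : Fin n, bfun a (Sum.inl (p, q)) i
          = (- a q.1 (Fin.last n)) * a p.1 i.castSucc + a p.1 (Fin.last n) * a q.1 i.castSucc :=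
        fun i => wcomb1 a p q i.castSucc
      simp only [e] at hk
      rw [hsplit p.1 q.1 _ _] at hk
      push_cast at hk
      exact hk
    obtain ⟨t, ht0, htl, htu⟩ := exists_t
      (fun p : {j : ι // 0 < a j (Fin.last n)} => -S p.1 / ((a p.1 (Fin.last n) : ℤ) : ℝ))
      (fun q : {j : ι // a j (Fin.last n) < 0} => S q.1 / (-((a q.1 (Fin.last n) : ℤ) : ℝ)))
      (by
        intro q
        have hq : ((a q.1 (Fin.last n) : ℤ) : ℝ) < 0 := by exact_mod_cast q.2
        exact div_pos (hN q) (by linarith))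
      (by
        intro p q
        have hp : (0:ℝ) < ((a p.1 (Fin.last n) : ℤ) : ℝ) := by exact_mod_cast p.2
        have hq : ((a q.1 (Fin.last n) : ℤ) : ℝ) < 0 := by exact_mod_cast q.2
        rw [div_lt_div_iff₀ hp (by linarith)]
        nlinarith [hPN p q])
    set V : Fin (n+1) → ℝ := Fin.snoc v' t with hV
    refine ⟨V, ?_, ?_⟩
    · intro i
      induction i using Fin.lastCases with
      | last =>
        simp only [hV, Fin.snoc_last]
        exact ht0
      | cast i =>
        simp only [hV, Fin.snoc_castSucc]
        exact hv0 i
    · intro j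
      have hsum : ∑ i : Fin (n+1), (a j i : ℝ) * V i
          = S j + (a j (Fin.last n) : ℝ) * t := by
        rw [Fin.sum_univ_castSucc]
        simp only [hV, Fin.snoc_castSucc, Fin.snoc_last, hS]
      rw [hsum]
      rcases lt_trichotomy (a j (Fin.last n)) 0 with hneg | hzero | hpos
      · have ht := htu ⟨j, hneg⟩
        have hq : ((a j (Fin.last n) : ℤ) : ℝ) < 0 := by exact_mod_cast hneg
        rw [lt_div_iff₀ (by linarith)] at ht
        nlinarith [ht]
      · have hz := hZ ⟨j, hzero⟩
        rw [hzero]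
        simpa using hz
      · have ht := htl ⟨j, hpos⟩
        have hp : (0:ℝ) < ((a j (Fin.last n) : ℤ) : ℝ) := by exact_mod_cast hpos
        rw [div_lt_iff₀ hp] at ht
        nlinarith [ht]

/-- Theorem thm-realisable: a finite family of formal strict
inequalities Σᵢ m_U(i)·xᵢ < Σᵢ m_V(i)·xᵢ over variables x₁,…,xₙ (indexed by a
finite type ι, with multiplicity functions U j, V j : Fin n → ℕ) is realisable by
a strictly positive real substitution iff no positive integer combination of the
inequalities results in A < B with B ⊆ A as multisets. -/
theorem stmt13 (n : ℕ) (hn : 1 ≤ n) {ι : Type*} [Fintype ι]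
    (U V : ι → Fin n → ℕ) :
    (∃ v : Fin n → ℝ, (∀ i, 0 < v i) ∧
        ∀ j : ι, ∑ i, (U j i : ℝ) * v i < ∑ i, (V j i : ℝ) * v i) ↔
    ¬ ∃ c : ι → ℕ, (∃ j, c j ≠ 0) ∧
        ∀ i : Fin n, ∑ j, c j * V j i ≤ ∑ j, c j * U j i := by
  constructor
  · rintro ⟨v, hvpos, hvlt⟩ ⟨c, ⟨j0, hj0⟩, hc⟩
    have h2 : ∀ (W : ι → Fin n → ℕ),
        ∑ j, (c j : ℝ) * (∑ i, (W j i : ℝ) * v i)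
          = ∑ i, ((∑ j, c j * W j i : ℕ) : ℝ) * v i := by
      intro W
      push_cast
      simp_rw [Finset.mul_sum]
      rw [Finset.sum_comm]
      simp_rw [Finset.sum_mul, mul_assoc]
    have h1 : ∑ j, (c j : ℝ) * (∑ i, (U j i : ℝ) * v i)
        < ∑ j, (c j : ℝ) * (∑ i, (V j i : ℝ) * v i) := by
      apply Finset.sum_lt_sum
      · intro j _
        exact mul_le_mul_of_nonneg_left (hvlt j).le (by positivity)
      · refine ⟨j0, mem_univ _, ?_⟩
        exact mul_lt_mul_of_pos_left (hvlt j0)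
          (by exact_mod_cast Nat.pos_of_ne_zero hj0)
    rw [h2 U, h2 V] at h1
    have h3 : ∑ i, ((∑ j, c j * V j i : ℕ) : ℝ) * v i
        ≤ ∑ i, ((∑ j, c j * U j i : ℕ) : ℝ) * v i := by
      apply Finset.sum_le_sum
      intro i _
      exact mul_le_mul_of_nonneg_right (by exact_mod_cast hc i) (hvpos i).le
    linarith
  · intro h
    have h' : ¬ ∃ c : ι → ℕ, (∃ j, c j ≠ 0) ∧
        ∀ i, ∑ j, (c j : ℤ) * ((V j i : ℤ) - (U j i : ℤ)) ≤ 0 := by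
      rintro ⟨c, hj, hc⟩
      refine h ⟨c, hj, fun i => ?_⟩
      have hZ : (∑ j, (c j : ℤ) * V j i) ≤ ∑ j, (c j : ℤ) * U j i := by
        have := hc i
        simp_rw [mul_sub] at this
        rw [Finset.sum_sub_distrib] at this
        linarith
      exact_mod_cast hZ
    obtain ⟨v, hv0, hv⟩ := gordan n (fun j i => (V j i : ℤ) - (U j i : ℤ)) h'
    have hA : ∀ j, (0:ℝ) < ∑ i, ((V j i : ℝ) - (U j i : ℝ)) * v i := by
      intro j
      have := hv j
      push_cast at this
      exact this
    by_cases hι : Nonempty ι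
    · obtain ⟨j1, _, hj1⟩ := Finset.exists_min_image (univ : Finset ι)
        (fun j => ∑ i, ((V j i : ℝ) - (U j i : ℝ)) * v i) ⟨hι.some, mem_univ _⟩
      obtain ⟨j2, _, hj2⟩ := Finset.exists_max_image (univ : Finset ι)
        (fun j => |∑ i, ((V j i : ℝ) - (U j i : ℝ))|) ⟨hι.some, mem_univ _⟩
      set m := ∑ i, ((V j1 i : ℝ) - (U j1 i : ℝ)) * v i with hm
      set M := |∑ i, ((V j2 i : ℝ) - (U j2 i : ℝ))| with hMdef
      have hm0 : 0 < m := hA j1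
      have hM0 : 0 ≤ M := abs_nonneg _
      set ε := m / (2*(M+1)) with hε
      have hε0 : 0 < ε := div_pos hm0 (by linarith)
      refine ⟨fun i => v i + ε, fun i => by have := hv0 i; show 0 < v i + ε; linarith, ?_⟩
      intro j
      rw [← sub_pos, ← Finset.sum_sub_distrib]
      have expand : ∑ i, ((V j i : ℝ) * (v i + ε) - (U j i : ℝ) * (v i + ε))
          = (∑ i, ((V j i : ℝ) - (U j i : ℝ)) * v i)
            + ε * (∑ i, ((V j i : ℝ) - (U j i : ℝ))) := by
        simp_rw [← sub_mul, mul_add]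
        rw [Finset.sum_add_distrib]
        congr 1
        rw [← Finset.sum_mul, mul_comm]
      rw [expand]
      have h1 : m ≤ ∑ i, ((V j i : ℝ) - (U j i : ℝ)) * v i := hj1 j (mem_univ j)
      have h2 : |∑ i, ((V j i : ℝ) - (U j i : ℝ))| ≤ M := hj2 j (mem_univ j)
      have h3 : -(|∑ i, ((V j i : ℝ) - (U j i : ℝ))|)
          ≤ ∑ i, ((V j i : ℝ) - (U j i : ℝ)) := neg_abs_le _
      have h4 : ε * (M+1) = m/2 := by rw [hε]; field_simp
      have h5a := mul_le_mul_of_nonneg_left h3 hε0.le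
      have h5b := mul_le_mul_of_nonneg_left h2 hε0.le
      nlinarith [h1, h4, hε0, hM0, h5a, h5b]
    · exact ⟨fun _ => 1, fun i => one_pos, fun j => absurd ⟨j⟩ hι⟩
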